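/- Let k be a field, n a natural number, Q an additive submonoid of ℤⁿ (equivalently, of Fin n → ℤ), and q ∈ Q with q ≠ 0. For a face F of Q (an additive submonoid F ≤ Q with a + b ∈ F ⟹ a ∈ F and b ∈ F for a, b ∈ Q), let p_F denote the ideal of the monoid algebra k[Q] spanned by the monomials x^p with p ∈ Q \ F. Then the radical of the principal ideal (x^q) of k[Q] equals the intersection of the ideals p_F over all faces F of Q with q ∉ F: √(x^q) = ⋂_{F face of Q, q ∉ F} p_F. -/

import Mathlib

open AddMonoidAlgebra

section Aux

variable {k : Type*} [Field k] {n : ℕ} (Q F : AddSubmonoid (Fin n → ℤ))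

/-- The ideal of elements whose support avoids the face `F`. -/
def faceIdeal (hface : ∀ a b : Fin n → ℤ, a ∈ Q → b ∈ Q → a + b ∈ F → a ∈ F ∧ b ∈ F) :
    Ideal (AddMonoidAlgebra k ↥Q) where
  carrier := {f | ∀ a ∈ f.coeff.support, (a : Fin n → ℤ) ∉ F}
  zero_mem' := by simp
  add_mem' := by
    classical
    intro f g hf hg a ha
    rcases Finset.mem_union.mp (Finsupp.support_add ha) with h | h
    · exact hf a h
    · exact hg a h
  smul_mem' := by
    classical
    intro r f hf a ha
    rw [smul_eq_mul] at ha
    obtain ⟨s, hs, t, ht, rfl⟩ := Finset.mem_add.mp (AddMonoidAlgebra.support_coeff_mul_subset r f ha)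
    intro hmem
    exact hf t ht ((hface s t s.2 t.2 hmem).2)

end Aux

section Aux2

variable {k : Type*} [Field k] {n : ℕ} {Q F : AddSubmonoid (Fin n → ℤ)}

theorem span_eq_faceIdeal
    (hface : ∀ a b : Fin n → ℤ, a ∈ Q → b ∈ Q → a + b ∈ F → a ∈ F ∧ b ∈ F) :
    Ideal.span {x : AddMonoidAlgebra k Q |
        ∃ p : Q, (p : Fin n → ℤ) ∉ F ∧ x = AddMonoidAlgebra.single p 1} =
      faceIdeal Q F hface := by
  classical
  apply le_antisymm
  · rw [Ideal.span_le]
    rintro x ⟨p, hp, rfl⟩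
    intro a ha
    rw [AddMonoidAlgebra.coeff_single, Finsupp.support_single_ne_zero p one_ne_zero, Finset.mem_singleton] at ha
    subst ha; exact hp
  · intro f hf
    rw [← AddMonoidAlgebra.sum_coeff_single f]
    apply Ideal.sum_mem
    intro a ha
    have : (AddMonoidAlgebra.single a (f.coeff a) : AddMonoidAlgebra k Q)
        = AddMonoidAlgebra.single 0 (f.coeff a) * AddMonoidAlgebra.single a 1 := by
      rw [AddMonoidAlgebra.single_mul_single, zero_add, mul_one]
    rw [this]
    exact Ideal.mul_mem_left _ _ (Ideal.subset_span ⟨a, hf a ha, rfl⟩)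

theorem faceIdeal_isPrime
    (hface : ∀ a b : Fin n → ℤ, a ∈ Q → b ∈ Q → a + b ∈ F → a ∈ F ∧ b ∈ F) :
    (faceIdeal (k := k) Q F hface).IsPrime := by
  classical
  haveI : UniqueSums ↥Q :=
    UniqueSums.of_injective_addHom Q.subtype.toAddHom Subtype.val_injective inferInstance
  constructor
  · intro h
    have h1 : (1 : AddMonoidAlgebra k ↥Q) ∈ faceIdeal Q F hface := h ▸ Submodule.mem_top
    have := h1 0 (by
      rw [AddMonoidAlgebra.one_def, AddMonoidAlgebra.coeff_single, Finsupp.support_single_ne_zero _ one_ne_zero]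
      exact Finset.mem_singleton_self _)
    exact this (by simpa using F.zero_mem)
  · intro f g hfg
    by_contra hcon
    push_neg at hcon
    obtain ⟨hf, hg⟩ := hcon
    set p : ↥Q → Prop := fun a => (a : Fin n → ℤ) ∈ F with hp
    have hsplit : ∀ h : AddMonoidAlgebra k ↥Q,
        ofCoeff (h.coeff.filter p) + ofCoeff (h.coeff.filter (fun a => ¬ p a)) = h :=
      fun h => congrArg ofCoeff (Finsupp.filter_pos_add_filter_neg h.coeff p)
    have hmem2 : ∀ h : AddMonoidAlgebra k ↥Q,
        ofCoeff (h.coeff.filter (fun a => ¬ p a)) ∈ faceIdeal Q F hface := by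
      intro h a ha
      rw [AddMonoidAlgebra.coeff_ofCoeff, Finsupp.support_filter, Finset.mem_filter] at ha
      exact ha.2
    set f1 : AddMonoidAlgebra k ↥Q := ofCoeff (f.coeff.filter p) with hf1
    set f2 : AddMonoidAlgebra k ↥Q := ofCoeff (f.coeff.filter (fun a => ¬ p a)) with hf2
    set g1 : AddMonoidAlgebra k ↥Q := ofCoeff (g.coeff.filter p) with hg1
    set g2 : AddMonoidAlgebra k ↥Q := ofCoeff (g.coeff.filter (fun a => ¬ p a)) with hg2
    have hne : ∀ h : AddMonoidAlgebra k ↥Q, h ∉ faceIdeal Q F hface →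
        (ofCoeff (h.coeff.filter p) : AddMonoidAlgebra k ↥Q) ≠ 0 := by
      intro h hh hzero
      apply hh
      intro a ha hMem
      have : (ofCoeff (h.coeff.filter p) : AddMonoidAlgebra k ↥Q).coeff a = h.coeff a :=
          Finsupp.filter_apply_pos p h.coeff hMem
      rw [hzero] at this
      exact Finsupp.mem_support_iff.mp ha this.symm
    have key : f1 * g1 ∈ faceIdeal Q F hface := by
      have hd : f1 * g1 = f * g - (f1 * g2 + f2 * g) := by
        have hsf : f1 + f2 = f := hsplit f
        have hsg : g1 + g2 = g := hsplit g
        rw [← hsf, ← hsg]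
        ring
      rw [hd]
      refine Submodule.sub_mem _ hfg (Submodule.add_mem _ ?_ ?_)
      · exact Ideal.mul_mem_left _ _ (hmem2 g)
      · exact Ideal.mul_mem_right _ _ (hmem2 f)
    have hne0 : f1 * g1 ≠ 0 := mul_ne_zero (hne f hf) (hne g hg)
    obtain ⟨a, ha⟩ := Finsupp.support_nonempty_iff.mpr (mt AddMonoidAlgebra.coeff_eq_zero.mp hne0)
    apply key a ha
    obtain ⟨s, hs, t, ht, rfl⟩ :=
      Finset.mem_add.mp (AddMonoidAlgebra.support_coeff_mul_subset f1 g1 ha)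
    rw [hf1, AddMonoidAlgebra.coeff_ofCoeff, Finsupp.support_filter, Finset.mem_filter] at hs
    rw [hg1, AddMonoidAlgebra.coeff_ofCoeff, Finsupp.support_filter, Finset.mem_filter] at ht
    exact F.add_mem hs.2 ht.2

end Aux2

/-- Let `Q` be an additive submonoid of `ℤⁿ` and `q ∈ Q`, `q ≠ 0`.  For a face `F` of
`Q`, let `p_F` be the ideal of `k[Q]` spanned by the monomials `x^p`, `p ∈ Q \ F`.
Then the radical of the principal ideal `(x^q)` equals the intersection of the ideals
`p_F` over all faces `F` of `Q` with `q ∉ F`. -/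
theorem radical_monomial_eq_iInf_face_ideals
    {k : Type*} [Field k] {n : ℕ}
    (Q : AddSubmonoid (Fin n → ℤ)) (q : Fin n → ℤ) (hq : q ∈ Q) (hq0 : q ≠ 0) :
    (Ideal.span {AddMonoidAlgebra.single (⟨q, hq⟩ : Q) (1 : k)}).radical =
      ⨅ (F : AddSubmonoid (Fin n → ℤ))
        (_ : F ≤ Q ∧
          (∀ a b : Fin n → ℤ, a ∈ Q → b ∈ Q → a + b ∈ F → a ∈ F ∧ b ∈ F) ∧ q ∉ F),
        Ideal.span {x : AddMonoidAlgebra k Q |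
          ∃ p : Q, (p : Fin n → ℤ) ∉ F ∧ x = AddMonoidAlgebra.single p 1} := by
  classical
  -- the combinatorial key lemma
  have key : ∀ p : ↥Q,
      (∀ F : AddSubmonoid (Fin n → ℤ), F ≤ Q →
        (∀ a b : Fin n → ℤ, a ∈ Q → b ∈ Q → a + b ∈ F → a ∈ F ∧ b ∈ F) →
        q ∉ F → (p : Fin n → ℤ) ∉ F) →
      ∃ m : ℕ, 0 < m ∧ ∃ r ∈ Q, m • (p : Fin n → ℤ) = q + r := by
    intro p hp
    by_cases hunit : ∃ b ∈ Q, q + b = 0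
    · obtain ⟨b, hb, hqb⟩ := hunit
      refine ⟨1, one_pos, b + p, Q.add_mem hb p.2, ?_⟩
      rw [one_nsmul, ← add_assoc, hqb, zero_add]
    · by_contra hcon
      push_neg at hcon
      set F0 : AddSubmonoid (Fin n → ℤ) :=
        { carrier := {a | a ∈ Q ∧ ∃ m : ℕ, ∃ b ∈ Q, a + b = m • (p : Fin n → ℤ)}
          zero_mem' := ⟨Q.zero_mem, 0, 0, Q.zero_mem, by simp⟩
          add_mem' := by
            rintro a b ⟨haQ, m₁, c₁, hc₁, h₁⟩ ⟨hbQ, m₂, c₂, hc₂, h₂⟩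
            refine ⟨Q.add_mem haQ hbQ, m₁ + m₂, c₁ + c₂, Q.add_mem hc₁ hc₂, ?_⟩
            rw [add_nsmul, ← h₁, ← h₂]
            abel } with hF0
      have hpF0 : (p : Fin n → ℤ) ∈ F0 :=
        ⟨p.2, 1, 0, Q.zero_mem, by rw [add_zero, one_nsmul]⟩
      have hface : ∀ a b : Fin n → ℤ, a ∈ Q → b ∈ Q → a + b ∈ F0 → a ∈ F0 ∧ b ∈ F0 := by
        rintro a b haQ hbQ ⟨_, m, c, hc, habc⟩
        constructor
        · exact ⟨haQ, m, b + c, Q.add_mem hbQ hc, by rw [← habc]; abel⟩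
        · exact ⟨hbQ, m, a + c, Q.add_mem haQ hc, by rw [← habc]; abel⟩
      have hqF0 : q ∉ F0 := by
        rintro ⟨-, m, b, hb, hqb⟩
        rcases Nat.eq_zero_or_pos m with hm | hm
        · exact hunit ⟨b, hb, by rw [hqb, hm, zero_nsmul]⟩
        · exact hcon m hm b hb hqb.symm
      exact hp F0 (fun a ha => ha.1) hface hqF0 hpF0
  apply le_antisymm
  · refine le_iInf fun F => le_iInf fun hF => ?_
    obtain ⟨hle, hface, hqF⟩ := hF
    rw [span_eq_faceIdeal hface]
    rw [(faceIdeal_isPrime hface).radical_le_iff, Ideal.span_le]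
    rintro x rfl
    intro a ha
    rw [AddMonoidAlgebra.coeff_single, Finsupp.support_single_ne_zero _ one_ne_zero, Finset.mem_singleton] at ha
    subst ha
    exact hqF
  · intro f hf
    simp only [Ideal.mem_iInf] at hf
    have hsupp : ∀ a ∈ f.coeff.support,
        ∀ F : AddSubmonoid (Fin n → ℤ), F ≤ Q →
          (∀ a b : Fin n → ℤ, a ∈ Q → b ∈ Q → a + b ∈ F → a ∈ F ∧ b ∈ F) →
          q ∉ F → (a : Fin n → ℤ) ∉ F := by
      intro a ha F hle hface hqF
      have hm := hf F ⟨hle, hface, hqF⟩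
      rw [span_eq_faceIdeal hface] at hm
      exact hm a ha
    rw [← AddMonoidAlgebra.sum_coeff_single f]
    apply Ideal.sum_mem
    intro a ha
    obtain ⟨m, hm, r, hr, hmr⟩ := key a (hsupp a ha)
    have hsingle : (AddMonoidAlgebra.single a (1 : k) : AddMonoidAlgebra k ↥Q) ∈
        (Ideal.span {AddMonoidAlgebra.single (⟨q, hq⟩ : Q) (1 : k)}).radical := by
      refine ⟨m, ?_⟩
      rw [AddMonoidAlgebra.single_pow, one_pow, Ideal.mem_span_singleton]
      refine ⟨AddMonoidAlgebra.single (⟨r, hr⟩ : Q) (1 : k), ?_⟩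
      rw [AddMonoidAlgebra.single_mul_single, mul_one]
      congr 1
      exact Subtype.ext (by simpa using hmr)
    have : (AddMonoidAlgebra.single a (f.coeff a) : AddMonoidAlgebra k ↥Q)
        = AddMonoidAlgebra.single 0 (f.coeff a) * AddMonoidAlgebra.single a 1 := by
      rw [AddMonoidAlgebra.single_mul_single, zero_add, mul_one]
    rw [this]
    exact Ideal.mul_mem_left _ _ hsingle
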